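/- arXiv:2508.06812 — 2 statements merged into one kernel-verified Lean document; each statement's English description precedes it below -/
import Mathlib

section
/- Let p be an odd prime and k ≥ 1. The superpower graph of D_{p^k} is isomorphic to the graph obtained from the disjoint union of a complete graph on p^k − 1 vertices and a complete graph on p^k vertices by adding one universal vertex (the join with a single vertex). -/
def superpowerGraph (G : Type*) [Group G] : SimpleGraph G where
  Adj a b := a ≠ b ∧ (orderOf a ∣ orderOf b ∨ orderOf b ∣ orderOf a)
  symm := ⟨fun _ _ h => ⟨h.1.symm, h.2.symm⟩⟩
  loopless := ⟨fun _ h => h.1 rfl⟩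

noncomputable instance (G : Type*) [Group G] [DecidableEq G] :
    DecidableRel (superpowerGraph G).Adj :=
  fun _ _ => instDecidableAnd

def tagOf {a b : ℕ} : Option (Fin a ⊕ Fin b) → ℕ
  | none => 0
  | some (Sum.inl _) => 1
  | some (Sum.inr _) => 2

/-- The join of a single vertex with the disjoint union of `K_a` and `K_b`. -/
def oneJoinTwoCliques (a b : ℕ) : SimpleGraph (Option (Fin a ⊕ Fin b)) where
  Adj x y := x ≠ y ∧ (tagOf x = 0 ∨ tagOf y = 0 ∨ tagOf x = tagOf y)
  symm := by
    refine ⟨?_⟩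
    rintro x y ⟨h1, h2⟩
    refine ⟨h1.symm, ?_⟩
    rcases h2 with h | h | h
    · exact Or.inr (Or.inl h)
    · exact Or.inl h
    · exact Or.inr (Or.inr h.symm)
  loopless := ⟨fun x h => h.1 rfl⟩

section Aux

open DihedralGroup

lemma superpowerGraph_adj {G : Type*} [Group G] (a b : G) :
    (superpowerGraph G).Adj a b ↔
      a ≠ b ∧ (orderOf a ∣ orderOf b ∨ orderOf b ∣ orderOf a) := Iff.rfl

lemma oneJoinTwoCliques_adj {a b : ℕ} (x y : Option (Fin a ⊕ Fin b)) :
    (oneJoinTwoCliques a b).Adj x y ↔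
      x ≠ y ∧ (tagOf x = 0 ∨ tagOf y = 0 ∨ tagOf x = tagOf y) := Iff.rfl

variable (n : ℕ) [NeZero n]

noncomputable def e1 : {i : ZMod n // i ≠ 0} ≃ Fin (n - 1) :=
  Fintype.equivFinOfCardEq (by simp [Fintype.card_subtype_compl, ZMod.card])

noncomputable def e2 : ZMod n ≃ Fin n :=
  Fintype.equivFinOfCardEq (ZMod.card n)

noncomputable def dEquiv : DihedralGroup n ≃ Option (Fin (n - 1) ⊕ Fin n) where
  toFun x := match x with
    | .r i => if h : i = 0 then none else some (.inl (e1 n ⟨i, h⟩))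
    | .sr i => some (.inr (e2 n i))
  invFun y := match y with
    | none => .r 0
    | some (.inl j) => .r ((e1 n).symm j).1
    | some (.inr j) => .sr ((e2 n).symm j)
  left_inv := by
    rintro (i | i)
    · by_cases h : i = 0 <;> simp [h]
    · simp
  right_inv := by
    rintro (_ | (j | j))
    · simp
    · simp [((e1 n).symm j).2]
    · simp

omit [NeZero n] in
lemma orderOf_r_zero : orderOf (DihedralGroup.r (0 : ZMod n)) = 1 := by
  rw [← DihedralGroup.one_def, orderOf_one]

lemma orderOf_r_dvd (i : ZMod n) : orderOf (DihedralGroup.r i) ∣ n := by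
  rw [DihedralGroup.orderOf_r]
  exact Nat.div_dvd_of_dvd (Nat.gcd_dvd_left n i.val)

end Aux

theorem stmt13 (p k : ℕ) (hp : Fact p.Prime) (hp2 : p ≠ 2) (hk : 1 ≤ k) :
    Nonempty
      (superpowerGraph (DihedralGroup (p ^ k)) ≃g
        oneJoinTwoCliques (p ^ k - 1) (p ^ k)) := by
  have pp := hp.out
  haveI : NeZero (p ^ k) := ⟨pow_ne_zero k pp.pos.ne'⟩
  have comp : ∀ a b : ℕ, a ∣ p ^ k → b ∣ p ^ k → a ∣ b ∨ b ∣ a := by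
    intro a b ha hb
    obtain ⟨x, _, rfl⟩ := (Nat.dvd_prime_pow pp).mp ha
    obtain ⟨y, _, rfl⟩ := (Nat.dvd_prime_pow pp).mp hb
    rcases le_total x y with h | h
    · exact Or.inl (pow_dvd_pow p h)
    · exact Or.inr (pow_dvd_pow p h)
  have hnot : ∀ i : ZMod (p ^ k), i ≠ 0 →
      ¬ orderOf (DihedralGroup.r i) ∣ 2 ∧ ¬ (2 : ℕ) ∣ orderOf (DihedralGroup.r i) := by
    intro i hi
    have hd : orderOf (DihedralGroup.r i) ∣ p ^ k := orderOf_r_dvd _ i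
    have h1 : orderOf (DihedralGroup.r i) ≠ 1 := by
      intro h
      exact hi (by simpa [DihedralGroup.one_def, -DihedralGroup.r_zero] using orderOf_eq_one_iff.mp h)
    have hpd : p ∣ orderOf (DihedralGroup.r i) := by
      obtain ⟨m, _, he⟩ := (Nat.dvd_prime_pow pp).mp hd
      cases m with
      | zero => rw [pow_zero] at he; exact absurd he h1
      | succ m => rw [he]; exact dvd_pow_self p (Nat.succ_ne_zero m)
    constructor
    · intro h2
      exact hp2 ((Nat.prime_dvd_prime_iff_eq pp Nat.prime_two).mp (hpd.trans h2))
    · intro h2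
      have h3 : (2 : ℕ) ∣ p := Nat.Prime.dvd_of_dvd_pow Nat.prime_two (h2.trans hd)
      exact hp2 ((Nat.prime_dvd_prime_iff_eq Nat.prime_two pp).mp h3).symm
  refine ⟨⟨dEquiv (p ^ k), ?_⟩⟩
  rintro (i | i) (j | j) <;>
    simp only [superpowerGraph_adj, oneJoinTwoCliques_adj, dEquiv, Equiv.coe_fn_mk]
  · by_cases hi : i = 0 <;> by_cases hj : j = 0 <;>
      simp [hi, hj, tagOf, orderOf_r_zero, -DihedralGroup.r_zero, comp _ _ (orderOf_r_dvd _ i) (orderOf_r_dvd _ j),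
        Subtype.ext_iff, eq_comm]
  · by_cases hi : i = 0
    · simp [hi, tagOf, orderOf_r_zero, -DihedralGroup.r_zero, DihedralGroup.orderOf_sr]
    · simp [hi, tagOf, DihedralGroup.orderOf_sr, (hnot i hi).1, (hnot i hi).2]
  · by_cases hj : j = 0
    · simp [hj, tagOf, orderOf_r_zero, -DihedralGroup.r_zero, DihedralGroup.orderOf_sr]
    · simp [hj, tagOf, DihedralGroup.orderOf_sr, (hnot j hj).1, (hnot j hj).2]
  · simp [tagOf, DihedralGroup.orderOf_sr]
end

section
/- Let p be an odd prime and G = D_p × D_p. Then 3p² − 1 is an eigenvalue of the signless Laplacian Q = D + A of the superpower graph S_G with multiplicity at least p² + 2p − 1, and 4p² − 2 is an eigenvalue of Q with multiplicity at least 2p² − 2p − 1. -/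
open Matrix Polynomial Finset

section LinAlg
variable {n : Type*} [Fintype n] [DecidableEq n]

lemma toEuclideanLin_eigenBasis {M : Matrix n n ℝ} (hM : M.IsHermitian) (j : n) :
    Matrix.toEuclideanLin M (hM.eigenvectorBasis j) =
      hM.eigenvalues j • hM.eigenvectorBasis j := by
  ext k
  simpa [Matrix.toEuclideanLin_apply] using congrFun (hM.mulVec_eigenvectorBasis j) k

lemma charpoly_eq_prod {M : Matrix n n ℝ} (hM : M.IsHermitian) :
    M.charpoly = ∏ i, (X - C (hM.eigenvalues i)) := by
  have h1 : M.charpoly = (Matrix.toEuclideanLin M).charpoly := by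
    rw [← LinearMap.charpoly_toMatrix (Matrix.toEuclideanLin M) (PiLp.basisFun 2 ℝ n)]
    congr 1
    rw [Matrix.toEuclideanLin_eq_toLin, LinearMap.toMatrix_toLin]
  have h2 : LinearMap.toMatrix hM.eigenvectorBasis.toBasis hM.eigenvectorBasis.toBasis
      (Matrix.toEuclideanLin M) = Matrix.diagonal hM.eigenvalues := by
    ext i j
    rw [LinearMap.toMatrix_apply, OrthonormalBasis.coe_toBasis, toEuclideanLin_eigenBasis hM j,
      _root_.map_smul]
    simp only [Matrix.diagonal_apply, Finsupp.single_apply, Finsupp.smul_apply, Module.Basis.repr_self,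
      smul_eq_mul]
    split_ifs with h
    · rw [h]; simp
    · simp [h]
  have h3 : (Matrix.diagonal hM.eigenvalues).charpoly = ∏ i, (X - C (hM.eigenvalues i)) := by
    have : charmatrix (Matrix.diagonal hM.eigenvalues)
        = Matrix.diagonal (fun i => X - C (hM.eigenvalues i)) := by
      ext i j
      by_cases hij : i = j
      · subst hij; simp [charmatrix_apply_eq]
      · simp [charmatrix_apply_ne _ _ _ hij, Matrix.diagonal_apply_ne _ hij]
    rw [Matrix.charpoly, this, det_diagonal]
  rw [h1, ← LinearMap.charpoly_toMatrix (Matrix.toEuclideanLin M) hM.eigenvectorBasis.toBasis,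
    h2, h3]

lemma rm_eq {M : Matrix n n ℝ} (hM : M.IsHermitian) (lam : ℝ) :
    (Finset.univ.filter (fun i => hM.eigenvalues i = lam)).card
      = M.charpoly.rootMultiplicity lam := by
  classical
  have hne : (∏ i : n, (X - C (hM.eigenvalues i))) ≠ 0 :=
    (monic_prod_of_monic _ _ fun i _ => monic_X_sub_C _).ne_zero
  rw [← Polynomial.count_roots, charpoly_eq_prod hM,
    Polynomial.roots_prod _ _ hne]
  simp only [roots_X_sub_C]
  rw [Multiset.bind_singleton, Multiset.count_map]
  rw [Finset.card_filter]
  simp [Finset.sum_ite_eq, eq_comm]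
  rfl

lemma finrank_eigenspace_le {M : Matrix n n ℝ} (hM : M.IsHermitian) (lam : ℝ) :
    Module.finrank ℝ (Module.End.eigenspace (Matrix.toEuclideanLin M) lam)
      ≤ (Finset.univ.filter fun i => hM.eigenvalues i = lam).card := by
  classical
  set b := hM.eigenvectorBasis with hb
  set s : Finset (EuclideanSpace ℝ n) :=
    (Finset.univ.filter fun i => hM.eigenvalues i = lam).image b with hs
  have hsub : Module.End.eigenspace (Matrix.toEuclideanLin M) lam
      ≤ Submodule.span ℝ (s : Set (EuclideanSpace ℝ n)) := by
    intro v hv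
    rw [Module.End.mem_eigenspace_iff] at hv
    have hsym := (Matrix.isHermitian_iff_isSymmetric.mp hM)
    have hrep : ∀ j, hM.eigenvalues j ≠ lam → b.repr v j = 0 := by
      intro j hj
      have h1 : (inner ℝ (b j) (Matrix.toEuclideanLin M v) : ℝ)
          = hM.eigenvalues j * inner ℝ (b j) v := by
        rw [← hsym (b j) v, toEuclideanLin_eigenBasis hM j, real_inner_smul_left]
      have h2 : (inner ℝ (b j) (Matrix.toEuclideanLin M v) : ℝ) = lam * inner ℝ (b j) v := by
        rw [hv, real_inner_smul_right]
      have h3 := h1.symm.trans h2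
      have hc : (inner ℝ (b j) v : ℝ) = 0 := by
        by_contra hc
        exact hj (mul_right_cancel₀ hc h3)
      rw [b.repr_apply_apply]; exact hc
    rw [← b.sum_repr v]
    apply Submodule.sum_mem
    intro i _
    by_cases hi : hM.eigenvalues i = lam
    · refine Submodule.smul_mem _ _ (Submodule.subset_span ?_)
      simp only [hs, Finset.coe_image, Set.mem_image, Finset.mem_coe, Finset.mem_filter]
      exact ⟨i, by simp [hi], rfl⟩
    · rw [hrep i hi, zero_smul]; exact Submodule.zero_mem _
  calc Module.finrank ℝ (Module.End.eigenspace (Matrix.toEuclideanLin M) lam)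
      ≤ Module.finrank ℝ (Submodule.span ℝ (s : Set (EuclideanSpace ℝ n))) :=
        Submodule.finrank_mono hsub
    _ ≤ s.card := finrank_span_finset_le_card s
    _ ≤ _ := Finset.card_image_le

lemma card_le_finrank_eigenspace (M : Matrix n n ℝ) (lam : ℝ) (S : Finset n)
    (h : ∀ u ∈ S, ∀ v ∈ S, u ≠ v →
      M *ᵥ (Pi.single u 1 - Pi.single v 1) = lam • (Pi.single u 1 - Pi.single v 1)) :
    S.card - 1 ≤ Module.finrank ℝ (Module.End.eigenspace (Matrix.toEuclideanLin M) lam) := by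
  classical
  rcases S.eq_empty_or_nonempty with hS | ⟨u₀, hu₀⟩
  · simp [hS]
  set T := S.erase u₀ with hT
  set W := Module.End.eigenspace (Matrix.toEuclideanLin M) lam with hW
  let w : n → (n → ℝ) := fun u => Pi.single u 1 - Pi.single u₀ 1
  have hmem : ∀ u ∈ T, (WithLp.equiv 2 (n → ℝ)).symm (w u) ∈ W := by
    intro u hu
    rw [hW, Module.End.mem_eigenspace_iff]
    have h1 := h u (Finset.mem_of_mem_erase hu) u₀ hu₀ (Finset.ne_of_mem_erase hu)
    ext k
    simpa [Matrix.toEuclideanLin_apply, w, Pi.single_apply] using congrFun h1 k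
  have hli0 : LinearIndependent ℝ (fun u : T => w u) := by
    rw [Fintype.linearIndependent_iff]
    intro c hc u
    have h2 := congrFun hc (u : n)
    simp only [Finset.sum_apply, Pi.smul_apply, Pi.sub_apply, Pi.single_apply, Pi.zero_apply,
      smul_eq_mul, w] at h2
    rw [Finset.sum_eq_single u] at h2
    · have hne : (u : n) ≠ u₀ := Finset.ne_of_mem_erase u.2
      simpa [hne] using h2
    · intro v _ hvu
      have : ¬ ((u : n) = (v : n)) := fun hh => hvu (Subtype.ext hh.symm)
      have hne : (u : n) ≠ u₀ := Finset.ne_of_mem_erase u.2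
      simp [this, hne]
    · intro hu; exact absurd (Finset.mem_univ u) hu
  have hli1 : LinearIndependent ℝ
      (fun u : T => (WithLp.linearEquiv 2 ℝ (n → ℝ)).symm (w u)) :=
    hli0.map' (WithLp.linearEquiv 2 ℝ (n → ℝ)).symm.toLinearMap
      (LinearEquiv.ker _)
  have hli : LinearIndependent ℝ
      (fun u : T => (⟨(WithLp.equiv 2 (n → ℝ)).symm (w u), hmem u u.2⟩ : W)) := by
    apply LinearIndependent.of_comp W.subtype
    exact hli1
  have h4 := hli.fintype_card_le_finrank
  rw [Fintype.card_coe, hT, Finset.card_erase_of_mem hu₀] at h4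
  exact h4

lemma clique_bound (M : Matrix n n ℝ) (hM : M.IsHermitian) (lam : ℝ) (S : Finset n)
    (h : ∀ u ∈ S, ∀ v ∈ S, u ≠ v →
      M *ᵥ (Pi.single u 1 - Pi.single v 1) = lam • (Pi.single u 1 - Pi.single v 1)) :
    S.card - 1 ≤ M.charpoly.rootMultiplicity lam :=
  (card_le_finrank_eigenspace M lam S h).trans
    ((finrank_eigenspace_le hM lam).trans (le_of_eq (rm_eq hM lam)))

lemma twin_mulVec (Gr : SimpleGraph n) [DecidableRel Gr.Adj] {u v : n}
    (hadj : Gr.Adj u v) (hdeg : Gr.degree u = Gr.degree v)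
    (htwin : ∀ w, w ≠ u → w ≠ v → (Gr.Adj w u ↔ Gr.Adj w v)) :
    (Matrix.diagonal (fun x => (Gr.degree x : ℝ)) + Gr.adjMatrix ℝ) *ᵥ
        (Pi.single u 1 - Pi.single v 1)
      = ((Gr.degree u : ℝ) - 1) • (Pi.single u 1 - Pi.single v 1) := by
  have huv : u ≠ v := Gr.ne_of_adj hadj
  set M := Matrix.diagonal (fun x => (Gr.degree x : ℝ)) + Gr.adjMatrix ℝ with hM
  funext w
  have hw : (M *ᵥ (Pi.single u 1 - Pi.single v 1)) w = M w u - M w v := by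
    rw [Matrix.mulVec_sub, Matrix.mulVec_single, Matrix.mulVec_single]
    simp
  rw [hw]
  by_cases hwu : w = u
  · subst hwu
    simp [hM, Matrix.add_apply, Matrix.diagonal_apply, huv, Ne.symm huv, hadj]
  · by_cases hwv : w = v
    · subst hwv
      simp [hM, Matrix.add_apply, Matrix.diagonal_apply, huv, Ne.symm huv, hadj,
        Gr.adj_comm, hdeg, hwu]
    · have := htwin w hwu hwv
      simp [hM, Matrix.add_apply, Matrix.diagonal_apply, hwu, hwv, Ne.symm hwu, Ne.symm hwv]
      by_cases h1 : Gr.Adj w u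
      · simp [h1, this.mp h1]
      · simp [h1, fun h2 => h1 (this.mpr h2)]
        exact fun h2 => h1 (this.mpr h2)

end LinAlg

lemma r_inj {p : ℕ} : Function.Injective (DihedralGroup.r : ZMod p → DihedralGroup p) :=
  fun a b h => by injection h

lemma sr_inj {p : ℕ} : Function.Injective (DihedralGroup.sr : ZMod p → DihedralGroup p) :=
  fun a b h => by injection h

lemma orderOf_dvd_two_mul {p : ℕ} [hp : Fact p.Prime] (x : DihedralGroup p) :
    orderOf x ∣ 2 * p := by
  haveI : NeZero p := ⟨hp.out.ne_zero⟩
  cases x with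
  | r i =>
      refine dvd_trans ?_ (dvd_mul_left p 2)
      rw [DihedralGroup.orderOf_r]
      exact Nat.div_dvd_of_dvd (Nat.gcd_dvd_left p i.val)
  | sr i => rw [DihedralGroup.orderOf_sr]; exact dvd_mul_right 2 p

lemma dvd_two_mul_prime {p : ℕ} (hp : p.Prime) (hp2 : p ≠ 2) {d : ℕ} (hd : d ∣ 2 * p) :
    d = 1 ∨ d = 2 ∨ d = p ∨ d = 2 * p := by
  by_cases h2 : 2 ∣ d
  · obtain ⟨e, rfl⟩ := h2
    have he : e ∣ p := (mul_dvd_mul_iff_left (two_ne_zero)).mp hd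
    rcases (Nat.Prime.eq_one_or_self_of_dvd hp e he) with h | h
    · subst h; right; left; rfl
    · subst h; right; right; right; rfl
  · have hcop : Nat.Coprime 2 d := (Nat.Prime.coprime_iff_not_dvd Nat.prime_two).mpr h2
    have hdp : d ∣ p := (Nat.Coprime.dvd_of_dvd_mul_left hcop.symm) hd
    rcases Nat.Prime.eq_one_or_self_of_dvd hp d hdp with h | h
    · left; exact h
    · right; right; left; exact h

section counts
variable {p : ℕ} [hp : Fact p.Prime]

lemma two_dvd_p_false (hp2 : p ≠ 2) (h : 2 ∣ p) : False :=
  hp2 ((Nat.prime_dvd_prime_iff_eq Nat.prime_two hp.out).mp h).symm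

lemma p_dvd_two_false (hp2 : p ≠ 2) (h : p ∣ 2) : False :=
  hp2 ((Nat.prime_dvd_prime_iff_eq hp.out Nat.prime_two).mp h)

lemma filter_pow_p [NeZero p] (hp2 : p ≠ 2) :
    (univ.filter fun x : DihedralGroup p => x ^ p = 1) = univ.image DihedralGroup.r := by
  ext x
  simp only [mem_filter, mem_univ, true_and, mem_image]
  constructor
  · intro hx
    cases x with
    | r i => exact ⟨i, rfl⟩
    | sr i =>
        exfalso
        have h := orderOf_dvd_of_pow_eq_one hx
        rw [DihedralGroup.orderOf_sr] at h
        exact two_dvd_p_false hp2 h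
  · rintro ⟨i, rfl⟩
    have : orderOf (DihedralGroup.r i) ∣ p := by
      rw [DihedralGroup.orderOf_r]
      exact Nat.div_dvd_of_dvd (Nat.gcd_dvd_left p i.val)
    exact orderOf_dvd_iff_pow_eq_one.mp this

lemma card_pow_p [NeZero p] (hp2 : p ≠ 2) :
    (univ.filter fun x : DihedralGroup p => x ^ p = 1).card = p := by
  rw [filter_pow_p hp2, Finset.card_image_of_injective _ r_inj]
  simp [ZMod.card]

lemma filter_pow_two [NeZero p] (hp2 : p ≠ 2) :
    (univ.filter fun x : DihedralGroup p => x ^ 2 = 1)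
      = insert (DihedralGroup.r 0) (univ.image DihedralGroup.sr) := by
  have h2 : (2 : ZMod p) ≠ 0 := by
    intro h
    have : ((2 : ℕ) : ZMod p) = 0 := by exact_mod_cast h
    rw [ZMod.natCast_eq_zero_iff] at this
    exact p_dvd_two_false hp2 this
  ext x
  simp only [mem_filter, mem_univ, true_and, mem_insert, mem_image]
  constructor
  · intro hx
    cases x with
    | r i =>
        left
        have : DihedralGroup.r (i + i) = DihedralGroup.r 0 := by
          rw [← DihedralGroup.r_mul_r, ← sq, hx, DihedralGroup.one_def]
        have hii : i + i = 0 := by injection this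
        have : (2 : ZMod p) * i = 0 := by rw [two_mul]; exact hii
        rcases mul_eq_zero.mp this with h | h
        · exact absurd h h2
        · rw [h]
    | sr i => exact Or.inr ⟨i, rfl⟩
  · rintro (h | ⟨i, rfl⟩)
    · rw [h, ← DihedralGroup.one_def]; exact one_pow 2
    · rw [sq]; exact DihedralGroup.sr_mul_self i

lemma card_pow_two [NeZero p] (hp2 : p ≠ 2) :
    (univ.filter fun x : DihedralGroup p => x ^ 2 = 1).card = p + 1 := by
  rw [filter_pow_two hp2, Finset.card_insert_of_notMem, Finset.card_image_of_injective _ sr_inj]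
  · simp [ZMod.card, Nat.add_comm]
  · simp only [mem_image]
    rintro ⟨i, h⟩
    exact absurd h (fun h' => by cases h'.2)

end counts

section prodcounts
variable {p : ℕ} [hp : Fact p.Prime]

lemma orderOf_dvd_two_mul_prod (x : DihedralGroup p × DihedralGroup p) :
    orderOf x ∣ 2 * p := by
  rw [orderOf_dvd_iff_pow_eq_one, Prod.ext_iff]
  constructor
  · rw [Prod.pow_fst, Prod.fst_one]
    exact orderOf_dvd_iff_pow_eq_one.mp (orderOf_dvd_two_mul x.1)
  · rw [Prod.pow_snd, Prod.snd_one]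
    exact orderOf_dvd_iff_pow_eq_one.mp (orderOf_dvd_two_mul x.2)

lemma card_prod_pow [NeZero p] (k : ℕ) :
    (univ.filter fun x : DihedralGroup p × DihedralGroup p => x ^ k = 1).card
      = (univ.filter fun a : DihedralGroup p => a ^ k = 1).card ^ 2 := by
  have h1 : (univ.filter fun x : DihedralGroup p × DihedralGroup p => x ^ k = 1)
      = (univ.filter fun a : DihedralGroup p => a ^ k = 1) ×ˢ
        (univ.filter fun a : DihedralGroup p => a ^ k = 1) := by
    rw [← Finset.filter_product, ← Finset.univ_product_univ]
    apply Finset.filter_congr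
    intro x _
    rw [Prod.ext_iff, Prod.pow_fst, Prod.pow_snd, Prod.fst_one, Prod.snd_one]
  rw [h1, Finset.card_product, sq]

lemma orderOf_eq_prime_iff' {k : ℕ} [hk : Fact k.Prime] {G : Type*} [Monoid G] (x : G) :
    orderOf x = k ↔ x ^ k = 1 ∧ x ≠ 1 := by
  constructor
  · intro h
    refine ⟨h ▸ pow_orderOf_eq_one x, ?_⟩
    rintro rfl
    rw [orderOf_one] at h
    exact hk.out.one_lt.ne h
  · rintro ⟨h1, h2⟩
    exact orderOf_eq_prime h1 h2

lemma filter_orderOf_prime {k : ℕ} [Fact k.Prime] {G : Type*} [Monoid G] [Fintype G]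
    [DecidableEq G] :
    (univ.filter fun x : G => orderOf x = k)
      = (univ.filter fun x : G => x ^ k = 1) \ {1} := by
  ext x
  simp [orderOf_eq_prime_iff', and_comm]

lemma card_filter_orderOf_prime {k : ℕ} [Fact k.Prime] {G : Type*} [Monoid G] [Fintype G]
    [DecidableEq G] :
    (univ.filter fun x : G => orderOf x = k).card
      = (univ.filter fun x : G => x ^ k = 1).card - 1 := by
  rw [filter_orderOf_prime, Finset.card_sdiff_of_subset]
  · simp
  · simp

lemma card_orderOf_p [NeZero p] (hp2 : p ≠ 2) :
    (univ.filter fun x : DihedralGroup p × DihedralGroup p => orderOf x = p).card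
      = p ^ 2 - 1 := by
  rw [card_filter_orderOf_prime, card_prod_pow, card_pow_p hp2]

lemma card_orderOf_two [NeZero p] (hp2 : p ≠ 2) :
    (univ.filter fun x : DihedralGroup p × DihedralGroup p => orderOf x = 2).card
      = p ^ 2 + 2 * p := by
  haveI : Fact (Nat.Prime 2) := ⟨Nat.prime_two⟩
  rw [card_filter_orderOf_prime, card_prod_pow, card_pow_two hp2]
  ring_nf
  omega

lemma card_orderOf_one {G : Type*} [Group G] [Fintype G] [DecidableEq G] :
    (univ.filter fun x : G => orderOf x = 1).card = 1 := by
  have : (univ.filter fun x : G => orderOf x = 1) = {1} := by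
    ext x; simp [orderOf_eq_one_iff]
  rw [this, Finset.card_singleton]

lemma card_univ_prod [NeZero p] :
    Fintype.card (DihedralGroup p × DihedralGroup p) = 4 * p ^ 2 := by
  rw [Fintype.card_prod, DihedralGroup.card]
  ring

lemma card_orderOf_two_mul [NeZero p] (hp2 : p ≠ 2) :
    (univ.filter fun x : DihedralGroup p × DihedralGroup p => orderOf x = 2 * p).card
      = 2 * p ^ 2 - 2 * p := by
  have hp3 : 3 ≤ p := by
    rcases hp.out.two_le.lt_or_eq with h | h
    · omega
    · exact absurd h.symm hp2
  have hsplit : (univ : Finset (DihedralGroup p × DihedralGroup p))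
      = ((univ.filter fun x => orderOf x = 1) ∪ (univ.filter fun x => orderOf x = 2)
        ∪ (univ.filter fun x => orderOf x = p))
        ∪ (univ.filter fun x => orderOf x = 2 * p) := by
    ext x
    simp only [Finset.mem_union, Finset.mem_filter, Finset.mem_univ, true_and, iff_true]
    rcases dvd_two_mul_prime hp.out hp2 (orderOf_dvd_two_mul_prod x) with h | h | h | h
    · tauto
    · tauto
    · tauto
    · tauto
  have hcard := congrArg Finset.card hsplit
  rw [Finset.card_univ, card_univ_prod] at hcard
  rw [Finset.card_union_of_disjoint, Finset.card_union_of_disjoint,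
    Finset.card_union_of_disjoint] at hcard
  · rw [card_orderOf_one, card_orderOf_two hp2, card_orderOf_p hp2] at hcard
    have hq : p ^ 2 ≥ 9 := by nlinarith
    omega
  · rw [Finset.disjoint_left]; intro a ha hb
    simp only [Finset.mem_filter] at ha hb; omega
  · rw [Finset.disjoint_left]; intro a ha hb
    simp only [Finset.mem_union, Finset.mem_filter] at ha hb
    rcases ha with ha | ha <;> omega
  · rw [Finset.disjoint_left]; intro a ha hb
    simp only [Finset.mem_union, Finset.mem_filter] at ha hb
    rcases ha with (ha | ha) | ha <;> omega
end prodcounts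

section degrees
variable {p : ℕ} [hp : Fact p.Prime]

lemma spg_adj_iff {G : Type*} [Group G] (x y : G) :
    (superpowerGraph G).Adj x y ↔ x ≠ y ∧ (orderOf x ∣ orderOf y ∨ orderOf y ∣ orderOf x) :=
  Iff.rfl

lemma degree_of_orderOf_two_mul [NeZero p] (x : DihedralGroup p × DihedralGroup p)
    (hx : orderOf x = 2 * p) :
    (superpowerGraph (DihedralGroup p × DihedralGroup p)).degree x = 4 * p ^ 2 - 1 := by
  have hnb : (superpowerGraph _).neighborFinset x = univ.erase x := by
    ext y
    rw [SimpleGraph.mem_neighborFinset, spg_adj_iff, Finset.mem_erase]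
    constructor
    · rintro ⟨h1, _⟩; exact ⟨Ne.symm h1, Finset.mem_univ y⟩
    · rintro ⟨h1, _⟩; exact ⟨Ne.symm h1, Or.inr (hx ▸ orderOf_dvd_two_mul_prod y)⟩
  show ((superpowerGraph _).neighborFinset x).card = _
  rw [hnb, Finset.card_erase_of_mem (Finset.mem_univ x), Finset.card_univ, card_univ_prod]

lemma degree_of_orderOf_two [NeZero p] (hp2 : p ≠ 2) (x : DihedralGroup p × DihedralGroup p)
    (hx : orderOf x = 2) :
    (superpowerGraph (DihedralGroup p × DihedralGroup p)).degree x = 3 * p ^ 2 := by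
  classical
  have hnb : (superpowerGraph _).neighborFinset x
      = univ \ insert x (univ.filter fun y => orderOf y = p) := by
    ext y
    rw [SimpleGraph.mem_neighborFinset, spg_adj_iff, Finset.mem_sdiff, Finset.mem_insert]
    simp only [Finset.mem_univ, true_and, Finset.mem_filter, not_or]
    constructor
    · rintro ⟨h1, h2⟩
      refine ⟨Ne.symm h1, ?_⟩
      intro hyp
      rw [hx, hyp] at h2
      rcases h2 with h | h
      · exact two_dvd_p_false hp2 h
      · exact p_dvd_two_false hp2 h
    · rintro ⟨h1, h2⟩
      refine ⟨Ne.symm h1, ?_⟩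
      rcases dvd_two_mul_prime hp.out hp2 (orderOf_dvd_two_mul_prod y) with h | h | h | h
      · right; rw [h, hx]; exact one_dvd 2
      · right; rw [h, hx]
      · exact absurd h h2
      · left; rw [h, hx]; exact ⟨p, rfl⟩
  show ((superpowerGraph _).neighborFinset x).card = _
  rw [hnb, Finset.card_sdiff_of_subset (Finset.subset_univ _), Finset.card_univ, card_univ_prod,
    Finset.card_insert_of_notMem, card_orderOf_p hp2]
  · have h1 : 1 ≤ p ^ 2 := Nat.one_le_iff_ne_zero.mpr (pow_ne_zero 2 hp.out.ne_zero)
    omega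
  · simp only [Finset.mem_filter]
    rintro ⟨-, h⟩
    rw [hx] at h
    exact hp2 h.symm

end degrees


theorem stmt19 (p : ℕ) (hp : Fact p.Prime) (hp2 : p ≠ 2) :
    p ^ 2 + 2 * p - 1 ≤
      Polynomial.rootMultiplicity (3 * (p : ℝ) ^ 2 - 1)
        (Matrix.charpoly
          (Matrix.diagonal
              (fun v : DihedralGroup p × DihedralGroup p =>
                ((superpowerGraph _).degree v : ℝ)) +
            (superpowerGraph (DihedralGroup p × DihedralGroup p)).adjMatrix ℝ)) ∧
    2 * p ^ 2 - 2 * p - 1 ≤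
      Polynomial.rootMultiplicity (4 * (p : ℝ) ^ 2 - 2)
        (Matrix.charpoly
          (Matrix.diagonal
              (fun v : DihedralGroup p × DihedralGroup p =>
                ((superpowerGraph _).degree v : ℝ)) +
            (superpowerGraph (DihedralGroup p × DihedralGroup p)).adjMatrix ℝ)) := by
  haveI : NeZero p := ⟨hp.out.ne_zero⟩
  have hM : (Matrix.diagonal
      (fun v : DihedralGroup p × DihedralGroup p =>
        ((superpowerGraph _).degree v : ℝ)) +
      (superpowerGraph (DihedralGroup p × DihedralGroup p)).adjMatrix ℝ).IsHermitian := by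
    apply Matrix.IsHermitian.add (Matrix.isHermitian_diagonal _)
    show ((superpowerGraph (DihedralGroup p × DihedralGroup p)).adjMatrix ℝ)ᴴ = _
    ext i j
    simp only [Matrix.conjTranspose_apply, SimpleGraph.adjMatrix_apply, star_trivial]
    by_cases h : (superpowerGraph (DihedralGroup p × DihedralGroup p)).Adj i j
    · simp [h, h.symm]
    · simp [h, show ¬ (superpowerGraph (DihedralGroup p × DihedralGroup p)).Adj j i from
        fun h2 => h h2.symm]
  constructor
  · have hb := clique_bound _ hM (3 * (p : ℝ) ^ 2 - 1)
      (Finset.univ.filter fun x : DihedralGroup p × DihedralGroup p => orderOf x = 2) ?_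
    · rwa [card_orderOf_two hp2] at hb
    · intro u hu v hv huv
      rw [Finset.mem_filter] at hu hv
      have hu2 := hu.2
      have hv2 := hv.2
      have hadj : (superpowerGraph (DihedralGroup p × DihedralGroup p)).Adj u v :=
        ⟨huv, Or.inl (by rw [hu2, hv2])⟩
      have hdeg : (superpowerGraph (DihedralGroup p × DihedralGroup p)).degree u
          = (superpowerGraph (DihedralGroup p × DihedralGroup p)).degree v := by
        rw [degree_of_orderOf_two hp2 u hu2, degree_of_orderOf_two hp2 v hv2]
      have htwin : ∀ w, w ≠ u → w ≠ v →
          ((superpowerGraph (DihedralGroup p × DihedralGroup p)).Adj w u ↔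
            (superpowerGraph (DihedralGroup p × DihedralGroup p)).Adj w v) := by
        intro w hwu hwv
        rw [spg_adj_iff, spg_adj_iff, hu2, hv2]
        simp [hwu, hwv]
      have hmv := twin_mulVec (superpowerGraph (DihedralGroup p × DihedralGroup p))
        hadj hdeg htwin
      rw [degree_of_orderOf_two hp2 u hu2] at hmv
      have hcast : (((3 * p ^ 2 : ℕ) : ℝ)) - 1 = 3 * (p : ℝ) ^ 2 - 1 := by push_cast; ring
      rw [hcast] at hmv
      exact hmv
  · have hb := clique_bound _ hM (4 * (p : ℝ) ^ 2 - 2)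
      (Finset.univ.filter fun x : DihedralGroup p × DihedralGroup p => orderOf x = 2 * p) ?_
    · rwa [card_orderOf_two_mul hp2] at hb
    · intro u hu v hv huv
      rw [Finset.mem_filter] at hu hv
      have hu2 := hu.2
      have hv2 := hv.2
      have hadj : (superpowerGraph (DihedralGroup p × DihedralGroup p)).Adj u v :=
        ⟨huv, Or.inl (by rw [hu2, hv2])⟩
      have hdeg : (superpowerGraph (DihedralGroup p × DihedralGroup p)).degree u
          = (superpowerGraph (DihedralGroup p × DihedralGroup p)).degree v := by
        rw [degree_of_orderOf_two_mul u hu2, degree_of_orderOf_two_mul v hv2]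
      have htwin : ∀ w, w ≠ u → w ≠ v →
          ((superpowerGraph (DihedralGroup p × DihedralGroup p)).Adj w u ↔
            (superpowerGraph (DihedralGroup p × DihedralGroup p)).Adj w v) := by
        intro w hwu hwv
        rw [spg_adj_iff, spg_adj_iff, hu2, hv2]
        simp [hwu, hwv]
      have hmv := twin_mulVec (superpowerGraph (DihedralGroup p × DihedralGroup p))
        hadj hdeg htwin
      rw [degree_of_orderOf_two_mul u hu2] at hmv
      have h1 : 1 ≤ 4 * p ^ 2 := by nlinarith [hp.out.pos]
      have hcast : (((4 * p ^ 2 - 1 : ℕ) : ℝ)) - 1 = 4 * (p : ℝ) ^ 2 - 2 := by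
        rw [Nat.cast_sub h1]
        push_cast
        ring
      rw [hcast] at hmv
      exact hmv
end
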